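/- Let p, q ≥ 1 and set n = 1 + p + q. Suppose D_F is a (1+p)×(1+p) matrix and D_H is a (1+q)×(1+q) matrix, written in block form D_F = [[0, a^T],[c, D_{F,x_0}]] and D_H = [[0, b^T],[d, D_{H,x_0}]]. Define the n×n matrix D = [[0, a^T, b^T],[c, D_{F,x_0}, c j^T + j b^T],[d, d j^T + j a^T, D_{H,x_0}]]. Suppose there are vectors α_F (of size 1+p) and α_H (of size 1+q) and reals λ_F, λ_H with α_F^T j = 1, α_H^T j = 1, α_F^T D_F = λ_F j^T, and α_H^T D_H = λ_H j^T. Define α of size n by: α_{x_0} = (α_F)_{x_0} + (α_H)_{x_0} - 1, with the remaining entries taken from the corresponding entries of α_F and α_H. Then α^T j = 1 and α^T D = (λ_F + λ_H) j^T. -/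
import Mathlib


open Matrix

theorem stmt_16 {p q : ℕ} (hp : 1 ≤ p) (hq : 1 ≤ q)
    (a c : Fin p → ℝ) (b d : Fin q → ℝ)
    (DF0 : Matrix (Fin p) (Fin p) ℝ) (DH0 : Matrix (Fin q) (Fin q) ℝ)
    (DF : Matrix (Unit ⊕ Fin p) (Unit ⊕ Fin p) ℝ)
    (hDF : DF = Matrix.of fun u v =>
      match u, v with
      | Sum.inl _, Sum.inl _ => 0
      | Sum.inl _, Sum.inr j => a j
      | Sum.inr i, Sum.inl _ => c i
      | Sum.inr i, Sum.inr j => DF0 i j)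
    (DH : Matrix (Unit ⊕ Fin q) (Unit ⊕ Fin q) ℝ)
    (hDH : DH = Matrix.of fun u v =>
      match u, v with
      | Sum.inl _, Sum.inl _ => 0
      | Sum.inl _, Sum.inr j => b j
      | Sum.inr i, Sum.inl _ => d i
      | Sum.inr i, Sum.inr j => DH0 i j)
    (D : Matrix (Unit ⊕ Fin p ⊕ Fin q) (Unit ⊕ Fin p ⊕ Fin q) ℝ)
    (hD : D = Matrix.of fun u v =>
      match u, v with
      | Sum.inl _, Sum.inl _ => 0
      | Sum.inl _, Sum.inr (Sum.inl j) => a j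
      | Sum.inl _, Sum.inr (Sum.inr j) => b j
      | Sum.inr (Sum.inl i), Sum.inl _ => c i
      | Sum.inr (Sum.inl i), Sum.inr (Sum.inl j) => DF0 i j
      | Sum.inr (Sum.inl i), Sum.inr (Sum.inr j) => c i + b j
      | Sum.inr (Sum.inr i), Sum.inl _ => d i
      | Sum.inr (Sum.inr i), Sum.inr (Sum.inl j) => d i + a j
      | Sum.inr (Sum.inr i), Sum.inr (Sum.inr j) => DH0 i j)
    (αF : Unit ⊕ Fin p → ℝ) (αH : Unit ⊕ Fin q → ℝ)
    (lamF lamH : ℝ)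
    (hαF1 : (∑ u, αF u) = 1) (hαH1 : (∑ u, αH u) = 1)
    (hαF : vecMul αF DF = fun _ => lamF)
    (hαH : vecMul αH DH = fun _ => lamH)
    (α : Unit ⊕ Fin p ⊕ Fin q → ℝ)
    (hα : α = fun u =>
      match u with
      | Sum.inl _ => αF (Sum.inl ()) + αH (Sum.inl ()) - 1
      | Sum.inr (Sum.inl i) => αF (Sum.inr i)
      | Sum.inr (Sum.inr i) => αH (Sum.inr i)) :
    (∑ u, α u) = 1 ∧ vecMul α D = fun _ => lamF + lamH := by

  subst hDF hDH hD hα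
  have hF0 := congrFun hαF (Sum.inl ())
  have hH0 := congrFun hαH (Sum.inl ())
  have hFj : ∀ j, αF (Sum.inl ()) * a j + ∑ i, αF (Sum.inr i) * DF0 i j = lamF := by
    intro j
    have := congrFun hαF (Sum.inr j)
    simpa [vecMul, dotProduct, Fintype.sum_sum_type] using this
  have hHj : ∀ j, αH (Sum.inl ()) * b j + ∑ i, αH (Sum.inr i) * DH0 i j = lamH := by
    intro j
    have := congrFun hαH (Sum.inr j)
    simpa [vecMul, dotProduct, Fintype.sum_sum_type] using this
  have hF0' : (∑ i, αF (Sum.inr i) * c i) = lamF := by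
    simpa [vecMul, dotProduct, Fintype.sum_sum_type] using hF0
  have hH0' : (∑ i, αH (Sum.inr i) * d i) = lamH := by
    simpa [vecMul, dotProduct, Fintype.sum_sum_type] using hH0
  have hFs : αF (Sum.inl ()) + ∑ i, αF (Sum.inr i) = 1 := by
    simpa [Fintype.sum_sum_type] using hαF1
  have hHs : αH (Sum.inl ()) + ∑ i, αH (Sum.inr i) = 1 := by
    simpa [Fintype.sum_sum_type] using hαH1
  constructor
  · simp only [Fintype.sum_sum_type]
    simp only [Finset.univ_unique, Finset.sum_singleton]
    linarith
  · funext v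
    match v with
    | Sum.inl _ =>
      simp [vecMul, dotProduct, Fintype.sum_sum_type, hF0', hH0']
    | Sum.inr (Sum.inl j) =>
      simp only [vecMul, dotProduct, Fintype.sum_sum_type, Matrix.of_apply,
        Finset.univ_unique, Finset.sum_singleton, mul_add, Finset.sum_add_distrib,
        ← Finset.sum_mul]
      linear_combination hFj j + hH0' + a j * hHs
    | Sum.inr (Sum.inr j) =>
      simp only [vecMul, dotProduct, Fintype.sum_sum_type, Matrix.of_apply,
        Finset.univ_unique, Finset.sum_singleton, mul_add, Finset.sum_add_distrib,
        ← Finset.sum_mul]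
      linear_combination hHj j + hF0' + b j * hFs
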